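/- Let N ≥ 1, Δx = 1/(N+1), and let L_N be the N×N matrix (1/Δx²)·tridiag(1,−2,1). For every τ > 0 and every z ∈ ℂ with |z| < 8τ, the matrix zI − τL_N is invertible and ‖(zI − τL_N)⁻¹‖_∞ ≤ 1/(8τ − |z|). -/

import Mathlib

open scoped BigOperators

/-- The `N × N` matrix `(1/Δx²)·tridiag(1, −2, 1)` with `Δx = 1/(N+1)`. -/
noncomputable def lmat (N : ℕ) : Matrix (Fin N) (Fin N) ℝ :=
  Matrix.of fun i j =>
    ((N : ℝ) + 1) ^ 2 *
      (if (i : ℕ) = (j : ℕ) then (-2 : ℝ)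
       else if (i : ℕ) + 1 = (j : ℕ) ∨ (j : ℕ) + 1 = (i : ℕ) then 1 else 0)

/-- The matrix norm induced by the maximum norm: maximum absolute row sum. -/
noncomputable def matNormC {ι : Type*} [Fintype ι] (A : Matrix ι ι ℂ) : ℝ :=
  ⨆ i, ∑ j, ‖A i j‖

noncomputable def gfun (N a b : ℕ) : ℝ :=
  (min a b : ℕ) * ((N : ℝ) + 1 - (max a b : ℕ))

noncomputable def smat (N : ℕ) : Matrix (Fin N) (Fin N) ℝ :=
  Matrix.of fun i k => gfun N ((i : ℕ) + 1) ((k : ℕ) + 1) / ((N : ℝ) + 1) ^ 3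

lemma sum_ite_coe (N n : ℕ) (f : Fin N → ℝ) :
    (∑ j : Fin N, if (j : ℕ) = n then f j else 0) = if h : n < N then f ⟨n, h⟩ else 0 := by
  split_ifs with h
  · rw [Finset.sum_eq_single (⟨n, h⟩ : Fin N)]
    · simp
    · intro j _ hj
      exact if_neg fun hc => hj (Fin.ext hc)
    · intro hmem; exact absurd (Finset.mem_univ _) hmem
  · apply Finset.sum_eq_zero
    intro j _
    refine if_neg fun hj => h ?_
    rw [← hj]
    exact j.isLt

lemma collapse (N : ℕ) (i : Fin N) (v : ℕ → ℝ) (h0 : v 0 = 0) (hNv : v (N + 1) = 0) :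
    (∑ j : Fin N, (if (i : ℕ) = (j : ℕ) then (-2 : ℝ)
        else if (i : ℕ) + 1 = (j : ℕ) ∨ (j : ℕ) + 1 = (i : ℕ) then 1 else 0) * v ((j : ℕ) + 1))
      = -2 * v ((i : ℕ) + 1) + v (i : ℕ) + v ((i : ℕ) + 2) := by
  have key : ∀ j : Fin N,
      (if (i : ℕ) = (j : ℕ) then (-2 : ℝ)
        else if (i : ℕ) + 1 = (j : ℕ) ∨ (j : ℕ) + 1 = (i : ℕ) then 1 else 0) * v ((j : ℕ) + 1)
      = (if (j : ℕ) = (i : ℕ) then (-2 : ℝ) * v ((j : ℕ) + 1) else 0)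
        + (if (j : ℕ) = (i : ℕ) + 1 then v ((j : ℕ) + 1) else 0)
        + (if (j : ℕ) + 1 = (i : ℕ) then v ((j : ℕ) + 1) else 0) := by
    intro j
    split_ifs <;> (try ring) <;> omega
  rw [Finset.sum_congr rfl fun j _ => key j, Finset.sum_add_distrib, Finset.sum_add_distrib]
  have s1 : (∑ j : Fin N, if (j : ℕ) = (i : ℕ) then (-2 : ℝ) * v ((j : ℕ) + 1) else 0)
      = -2 * v ((i : ℕ) + 1) := by
    rw [sum_ite_coe N (i : ℕ) fun j => (-2 : ℝ) * v ((j : ℕ) + 1), dif_pos i.isLt]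
  have s2 : (∑ j : Fin N, if (j : ℕ) = (i : ℕ) + 1 then v ((j : ℕ) + 1) else 0)
      = v ((i : ℕ) + 2) := by
    rw [sum_ite_coe N ((i : ℕ) + 1) fun j => v ((j : ℕ) + 1)]
    split_ifs with h
    · rfl
    · have : (i : ℕ) + 2 = N + 1 := by have := i.isLt; omega
      rw [this, hNv]
  have s3 : (∑ j : Fin N, if (j : ℕ) + 1 = (i : ℕ) then v ((j : ℕ) + 1) else 0)
      = v (i : ℕ) := by
    rcases Nat.eq_zero_or_pos (i : ℕ) with hi | hi
    · rw [hi, h0]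
      apply Finset.sum_eq_zero
      intro j _
      rw [if_neg (by omega)]
    · have hcong : ∀ j : Fin N, (if (j : ℕ) + 1 = (i : ℕ) then v ((j : ℕ) + 1) else 0)
          = (if (j : ℕ) = (i : ℕ) - 1 then v ((j : ℕ) + 1) else 0) := by
        intro j
        congr 1
        exact propext (by omega)
      rw [Finset.sum_congr rfl fun j _ => hcong j,
        sum_ite_coe N ((i : ℕ) - 1) fun j => v ((j : ℕ) + 1),
        dif_pos (by have := i.isLt; omega : (i : ℕ) - 1 < N)]
      show v ((i : ℕ) - 1 + 1) = v (i : ℕ)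
      congr 1
      omega
  rw [s1, s2, s3]; ring

lemma gdiff (N b c : ℕ) :
    -2 * gfun N (c + 1) b + gfun N c b + gfun N (c + 2) b
      = if c + 1 = b then -((N : ℝ) + 1) else 0 := by
  rcases lt_trichotomy (c + 1) b with h | h | h
  · rw [if_neg (by omega)]
    simp only [gfun]
    rw [min_eq_left (by omega), min_eq_left (by omega), min_eq_left (by omega),
      max_eq_right (by omega), max_eq_right (by omega), max_eq_right (by omega)]
    push_cast; ring
  · rw [if_pos h, ← h]
    simp only [gfun]
    rw [min_eq_left (by omega), min_eq_left (by omega), min_eq_right (by omega),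
      max_eq_right (by omega), max_eq_right (by omega), max_eq_left (by omega)]
    push_cast; ring
  · rw [if_neg (by omega)]
    simp only [gfun]
    rw [min_eq_right (by omega), min_eq_right (by omega), min_eq_right (by omega),
      max_eq_left (by omega), max_eq_left (by omega), max_eq_left (by omega)]
    push_cast; ring

lemma gfun_zero_left (N b : ℕ) : gfun N 0 b = 0 := by simp [gfun]

lemma gfun_top_left (N b : ℕ) (hb : b ≤ N + 1) : gfun N (N + 1) b = 0 := by
  simp only [gfun]
  rw [max_eq_left hb]
  push_cast; ring

lemma lmat_mul_smat (N : ℕ) : lmat N * smat N = -1 := by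
  ext i k
  rw [Matrix.mul_apply]
  simp only [lmat, smat, Matrix.of_apply]
  have hstep : ∀ j : Fin N,
      ((N : ℝ) + 1) ^ 2 * (if (i : ℕ) = (j : ℕ) then (-2 : ℝ)
          else if (i : ℕ) + 1 = (j : ℕ) ∨ (j : ℕ) + 1 = (i : ℕ) then 1 else 0)
        * (gfun N ((j : ℕ) + 1) ((k : ℕ) + 1) / ((N : ℝ) + 1) ^ 3)
      = (((N : ℝ) + 1) ^ 2 / ((N : ℝ) + 1) ^ 3) *
          ((if (i : ℕ) = (j : ℕ) then (-2 : ℝ)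
          else if (i : ℕ) + 1 = (j : ℕ) ∨ (j : ℕ) + 1 = (i : ℕ) then 1 else 0)
            * gfun N ((j : ℕ) + 1) ((k : ℕ) + 1)) := fun j => by ring
  rw [Finset.sum_congr rfl fun j _ => hstep j, ← Finset.mul_sum,
    collapse N i (fun n => gfun N n ((k : ℕ) + 1)) (gfun_zero_left N _)
      (gfun_top_left N _ (by have := k.isLt; omega)),
    gdiff N ((k : ℕ) + 1) (i : ℕ)]
  have hN1 : ((N : ℝ) + 1) ≠ 0 := by positivity
  by_cases h : i = k
  · subst h
    rw [if_pos rfl, Matrix.neg_apply, Matrix.one_apply_eq]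
    field_simp
  · rw [if_neg (by simpa [Fin.ext_iff] using h), Matrix.neg_apply, Matrix.one_apply_ne h]
    ring

lemma lmat_transpose (N : ℕ) : (lmat N).transpose = lmat N := by
  ext i j
  simp only [Matrix.transpose_apply, lmat, Matrix.of_apply]
  congr 1
  split_ifs <;> (try rfl) <;> (exfalso; omega)

lemma smat_transpose (N : ℕ) : (smat N).transpose = smat N := by
  ext i j
  simp only [Matrix.transpose_apply, smat, Matrix.of_apply, gfun, min_comm, max_comm]

lemma smat_mul_lmat (N : ℕ) : smat N * lmat N = -1 := by
  have h := congrArg Matrix.transpose (lmat_mul_smat N)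
  rw [Matrix.transpose_mul, lmat_transpose, smat_transpose] at h
  rw [h, Matrix.transpose_neg, Matrix.transpose_one]

noncomputable def ufun (N n : ℕ) : ℝ :=
  (n : ℝ) * ((N : ℝ) + 1 - (n : ℝ)) / (2 * ((N : ℝ) + 1) ^ 2)

lemma lmat_mulVec_ufun (N : ℕ) :
    (lmat N).mulVec (fun j : Fin N => ufun N ((j : ℕ) + 1)) = fun _ => (-1 : ℝ) := by
  funext i
  show ∑ j : Fin N, lmat N i j * ufun N ((j : ℕ) + 1) = -1
  simp only [lmat, Matrix.of_apply]
  have hstep : ∀ j : Fin N,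
      ((N : ℝ) + 1) ^ 2 * (if (i : ℕ) = (j : ℕ) then (-2 : ℝ)
          else if (i : ℕ) + 1 = (j : ℕ) ∨ (j : ℕ) + 1 = (i : ℕ) then 1 else 0)
        * ufun N ((j : ℕ) + 1)
      = ((N : ℝ) + 1) ^ 2 *
          ((if (i : ℕ) = (j : ℕ) then (-2 : ℝ)
          else if (i : ℕ) + 1 = (j : ℕ) ∨ (j : ℕ) + 1 = (i : ℕ) then 1 else 0)
            * ufun N ((j : ℕ) + 1)) := fun j => by ring
  rw [Finset.sum_congr rfl fun j _ => hstep j, ← Finset.mul_sum,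
    collapse N i (fun n => ufun N n) (by simp [ufun]) (by simp [ufun]; try ring)]
  have hN1 : ((N : ℝ) + 1) ≠ 0 := by positivity
  simp only [ufun]
  push_cast
  field_simp
  ring

lemma smat_rowsum (N : ℕ) (i : Fin N) :
    ∑ k : Fin N, smat N i k = ufun N ((i : ℕ) + 1) := by
  have h1 : (smat N).mulVec (fun _ : Fin N => (-1 : ℝ))
      = fun j : Fin N => -ufun N ((j : ℕ) + 1) := by
    have h0 : (fun _ : Fin N => (-1 : ℝ))
        = (lmat N).mulVec (fun j : Fin N => ufun N ((j : ℕ) + 1)) := (lmat_mulVec_ufun N).symm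
    rw [h0, Matrix.mulVec_mulVec, smat_mul_lmat, Matrix.neg_mulVec, Matrix.one_mulVec]
    funext j
    simp
  have h6 := congrFun h1 i
  simp only [Matrix.mulVec, dotProduct, mul_neg_one, Finset.sum_neg_distrib] at h6
  linarith

lemma smat_nonneg (N : ℕ) (i k : Fin N) : 0 ≤ smat N i k := by
  simp only [smat, Matrix.of_apply, gfun]
  apply div_nonneg _ (by positivity)
  apply mul_nonneg (Nat.cast_nonneg _)
  rw [sub_nonneg]
  have : (max ((i : ℕ) + 1) ((k : ℕ) + 1)) ≤ N := by
    have := i.isLt; have := k.isLt; omega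
  calc ((max ((i : ℕ) + 1) ((k : ℕ) + 1) : ℕ) : ℝ) ≤ (N : ℝ) := by exact_mod_cast this
    _ ≤ (N : ℝ) + 1 := by linarith

lemma ufun_le (N n : ℕ) : ufun N n ≤ 1 / 8 := by
  have hN1 : (0 : ℝ) < (N : ℝ) + 1 := by positivity
  rw [ufun, div_le_div_iff₀ (by positivity) (by norm_num)]
  nlinarith [sq_nonneg ((N : ℝ) + 1 - 2 * (n : ℝ))]

section ComplexPart

open Matrix
open scoped NNReal

attribute [local instance] Matrix.linftyOpNormedAddCommGroup Matrix.linftyOpNormedRing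
  Matrix.linftyOpNormedAlgebra

lemma map_mul_ofReal {N : ℕ} (A B : Matrix (Fin N) (Fin N) ℝ) :
    (A.map Complex.ofReal) * (B.map Complex.ofReal) = (A * B).map Complex.ofReal := by
  ext i k
  simp only [Matrix.mul_apply, Matrix.map_apply]
  norm_cast

lemma map_neg_one_ofReal {N : ℕ} :
    ((-1 : Matrix (Fin N) (Fin N) ℝ)).map Complex.ofReal = -1 := by
  ext i k
  by_cases h : i = k <;>
    simp [Matrix.map_apply, Matrix.neg_apply, Matrix.one_apply, h]

lemma rowsum_le_norm {N : ℕ} (X : Matrix (Fin N) (Fin N) ℂ) (i : Fin N) :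
    ∑ j, ‖X i j‖ ≤ ‖X‖ := by
  rw [Matrix.linfty_opNorm_def]
  have h := Finset.le_sup (f := fun i : Fin N => ∑ j, ‖X i j‖₊) (Finset.mem_univ i)
  rw [← NNReal.coe_le_coe, NNReal.coe_sum] at h
  simpa using h

lemma norm_Sc_le {N : ℕ} : ‖(smat N).map Complex.ofReal‖ ≤ 1 / 8 := by
  rw [Matrix.linfty_opNorm_def]
  have hsup : (Finset.univ.sup fun i : Fin N => ∑ j, ‖((smat N).map Complex.ofReal) i j‖₊)
      ≤ (1 / 8 : ℝ≥0) := by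
    apply Finset.sup_le
    intro i _
    rw [← NNReal.coe_le_coe, NNReal.coe_sum]
    have hterm : ∀ j : Fin N, ((‖((smat N).map Complex.ofReal) i j‖₊ : ℝ)) = smat N i j := by
      intro j
      rw [coe_nnnorm, Matrix.map_apply, Complex.norm_real, Real.norm_eq_abs, abs_of_nonneg (smat_nonneg N i j)]
    rw [Finset.sum_congr rfl fun j _ => hterm j, smat_rowsum N i]
    have := ufun_le N ((i : ℕ) + 1)
    calc ufun N ((i : ℕ) + 1) ≤ 1 / 8 := this
      _ = ((1 / 8 : ℝ≥0) : ℝ) := by norm_num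
  exact_mod_cast hsup

theorem stmt2 (N : ℕ) (hN : 1 ≤ N) (τ : ℝ) (hτ : 0 < τ) (z : ℂ)
    (hz : ‖z‖ < 8 * τ) :
    IsUnit (z • (1 : Matrix (Fin N) (Fin N) ℂ) - (τ : ℂ) • (lmat N).map Complex.ofReal) ∧
      matNormC (z • (1 : Matrix (Fin N) (Fin N) ℂ) - (τ : ℂ) • (lmat N).map Complex.ofReal)⁻¹
        ≤ 1 / (8 * τ - ‖z‖) := by
  haveI : Nonempty (Fin N) := ⟨⟨0, hN⟩⟩
  letI : CompleteSpace (Matrix (Fin N) (Fin N) ℂ) :=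
    by infer_instance
  set a : ℝ := ‖z‖ with ha
  have ha0 : 0 ≤ a := norm_nonneg z
  set Lc : Matrix (Fin N) (Fin N) ℂ := (lmat N).map Complex.ofReal with hLcdef
  set Sc : Matrix (Fin N) (Fin N) ℂ := (smat N).map Complex.ofReal with hScdef
  have hLS : Lc * Sc = -1 := by
    rw [hLcdef, hScdef, map_mul_ofReal, lmat_mul_smat, map_neg_one_ofReal]
  have hSL : Sc * Lc = -1 := by
    rw [hLcdef, hScdef, map_mul_ofReal, smat_mul_lmat, map_neg_one_ofReal]
  have hτC : (τ : ℂ) ≠ 0 := by exact_mod_cast hτ.ne'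
  set s : ℝ := ‖Sc‖ with hsdef
  have hs0 : 0 ≤ s := norm_nonneg _
  have hs : s ≤ 1 / 8 := norm_Sc_le
  set t : Matrix (Fin N) (Fin N) ℂ := (-(z / (τ : ℂ))) • Sc with htdef
  have hnt : ‖t‖ = a / τ * s := by
    rw [htdef, norm_smul, norm_neg]
    congr 1
    rw [norm_div, Complex.norm_real, Real.norm_eq_abs, abs_of_pos hτ]
  have hts : a / τ * s < 1 := by
    have h1 : a / τ * s ≤ a / τ * (1 / 8) := by
      apply mul_le_mul_of_nonneg_left hs (by positivity)
    have h2 : a / τ * (1 / 8) < 1 := by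
      rw [div_mul_eq_mul_div, div_lt_one (by positivity)]
      linarith
    linarith
  have ht1 : ‖t‖ < 1 := by rw [hnt]; exact hts
  -- the factorization
  have hmul2 : ((-(τ : ℂ)) • Lc) * t = -(z • (1 : Matrix (Fin N) (Fin N) ℂ)) := by
    rw [htdef, smul_mul_assoc, mul_smul_comm, smul_smul, hLS]
    rw [show (-(τ : ℂ)) * (-(z / (τ : ℂ))) = z by field_simp]
    rw [smul_neg]
  have hfact : z • (1 : Matrix (Fin N) (Fin N) ℂ) - (τ : ℂ) • Lc
      = ((-(τ : ℂ)) • Lc) * (1 - t) := by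
    rw [mul_sub, mul_one, hmul2, sub_neg_eq_add, neg_smul]
    exact sub_eq_neg_add _ _
  have hval_inv : ((-(τ : ℂ)) • Lc) * (((τ : ℂ))⁻¹ • Sc) = 1 := by
    rw [smul_mul_assoc, mul_smul_comm, smul_smul, hLS,
      show (-(τ : ℂ)) * ((τ : ℂ))⁻¹ = -1 by field_simp]
    simp
  have hinv_val : ((((τ : ℂ))⁻¹ • Sc)) * ((-(τ : ℂ)) • Lc) = 1 := by
    rw [smul_mul_assoc, mul_smul_comm, smul_smul, hSL,
      show ((τ : ℂ))⁻¹ * (-(τ : ℂ)) = -1 by field_simp]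
    simp
  set u : (Matrix (Fin N) (Fin N) ℂ)ˣ := Units.oneSub t ht1 with hudef
  set u1 : (Matrix (Fin N) (Fin N) ℂ)ˣ :=
    ⟨((-(τ : ℂ)) • Lc), (((τ : ℂ))⁻¹ • Sc), hval_inv, hinv_val⟩ with hu1def
  have hA : z • (1 : Matrix (Fin N) (Fin N) ℂ) - (τ : ℂ) • Lc = ((u1 * u : _ˣ) : _) := by
    rw [Units.val_mul, hfact]; rfl
  constructor
  · exact ⟨u1 * u, hA.symm⟩
  · have h1t : (1 - t) * ((u⁻¹ : _ˣ) : Matrix (Fin N) (Fin N) ℂ) = 1 := by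
      have := u.mul_inv
      exact this
    have hABone : (z • (1 : Matrix (Fin N) (Fin N) ℂ) - (τ : ℂ) • Lc) *
        (((u⁻¹ : _ˣ) : Matrix (Fin N) (Fin N) ℂ) * (((τ : ℂ))⁻¹ • Sc)) = 1 := by
      rw [hfact, mul_assoc, ← mul_assoc (1 - t), h1t, one_mul, hval_inv]
    have hAinv : (z • (1 : Matrix (Fin N) (Fin N) ℂ) - (τ : ℂ) • Lc)⁻¹
        = ((u⁻¹ : _ˣ) : Matrix (Fin N) (Fin N) ℂ) * (((τ : ℂ))⁻¹ • Sc) :=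
      Matrix.inv_eq_right_inv hABone
    have hinvnorm : ‖((u⁻¹ : _ˣ) : Matrix (Fin N) (Fin N) ℂ)‖ ≤ (1 - ‖t‖)⁻¹ := by
      have h := tsum_geometric_le_of_norm_lt_one t ht1
      rw [norm_one] at h
      have heq : ((u⁻¹ : _ˣ) : Matrix (Fin N) (Fin N) ℂ) = ∑' n : ℕ, t ^ n := rfl
      rw [heq]
      convert h using 3
      · rfl
      · rfl
      · simp
    have hscnorm : ‖((τ : ℂ))⁻¹ • Sc‖ = τ⁻¹ * s := by
      rw [norm_smul, norm_inv, Complex.norm_real, Real.norm_eq_abs, abs_of_pos hτ]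
    have hBnorm : ‖((u⁻¹ : _ˣ) : Matrix (Fin N) (Fin N) ℂ) * (((τ : ℂ))⁻¹ • Sc)‖
        ≤ (1 - ‖t‖)⁻¹ * (τ⁻¹ * s) := by
      calc ‖((u⁻¹ : _ˣ) : Matrix (Fin N) (Fin N) ℂ) * (((τ : ℂ))⁻¹ • Sc)‖
          ≤ ‖((u⁻¹ : _ˣ) : Matrix (Fin N) (Fin N) ℂ)‖ * ‖((τ : ℂ))⁻¹ • Sc‖ := norm_mul_le _ _
        _ ≤ (1 - ‖t‖)⁻¹ * (τ⁻¹ * s) := by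
            rw [hscnorm]
            apply mul_le_mul_of_nonneg_right hinvnorm (by positivity)
    have harith : (1 - ‖t‖)⁻¹ * (τ⁻¹ * s) ≤ 1 / (8 * τ - a) := by
      rw [hnt]
      have hden : 0 < 1 - a / τ * s := by linarith
      have hden2 : 0 < τ - a * s := by
        have : τ - a * s = τ * (1 - a / τ * s) := by field_simp
        rw [this]; positivity
      have hkey : (1 - a / τ * s)⁻¹ * (τ⁻¹ * s) = s / (τ - a * s) := by
        field_simp
      rw [hkey, div_le_div_iff₀ hden2 (by linarith)]
      nlinarith
    rw [hAinv]
    rw [matNormC]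
    apply ciSup_le
    intro i
    calc ∑ j, ‖(((u⁻¹ : _ˣ) : Matrix (Fin N) (Fin N) ℂ) * (((τ : ℂ))⁻¹ • Sc)) i j‖
        ≤ ‖((u⁻¹ : _ˣ) : Matrix (Fin N) (Fin N) ℂ) * (((τ : ℂ))⁻¹ • Sc)‖ := rowsum_le_norm _ i
      _ ≤ (1 - ‖t‖)⁻¹ * (τ⁻¹ * s) := hBnorm
      _ ≤ 1 / (8 * τ - a) := harith

end ComplexPart
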